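/- Let f : ℝ² → ℝ be 4-times continuously differentiable on an open set containing [a - 3h/2, a + 3h/2] × [b - 3h/2, b + 3h/2], h > 0, and let f̄(x,y) = (1/h²)·∫_{x-h/2}^{x+h/2}∫_{y-h/2}^{y+h/2} f(s,t) dt ds be the 2D cell average. With Δ^{2,x} and Δ^{2,y} the second central differences (step h) in each variable, one has f(a,b) = f̄(a,b) - (1/24)·(Δ^{2,x}f̄(a,b) + Δ^{2,y}f̄(a,b)) + (1/576)·Δ^{2,x}Δ^{2,y}f̄(a,b) + O(h⁴) as h → 0. -/

import Mathlib

open intervalIntegral in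
lemma cubic_integral (d0 d1 d2 d3 L l r : ℝ) :
    ∫ x in l..r, (d0 + d1*(x-L) + d2*(x-L)^2 + d3*(x-L)^3) =
      d0*((r-L)-(l-L)) + d1*((r-L)^2-(l-L)^2)/2 + d2*((r-L)^3-(l-L)^3)/3
        + d3*((r-L)^4-(l-L)^4)/4 := by
  have h1 : (∫ x in l..r, (d0 + d1*(x-L) + d2*(x-L)^2 + d3*(x-L)^3)) =
      ∫ u in (l-L)..(r-L), (d0 + d1*u + d2*u^2 + d3*u^3) :=
    intervalIntegral.integral_comp_sub_right (fun u => d0 + d1*u + d2*u^2 + d3*u^3) L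
  have i0 : IntervalIntegrable (fun _ : ℝ => d0) MeasureTheory.volume (l-L) (r-L) :=
    (continuous_const).intervalIntegrable _ _
  have i1 : IntervalIntegrable (fun u : ℝ => d1*u) MeasureTheory.volume (l-L) (r-L) :=
    (continuous_const.mul continuous_id).intervalIntegrable _ _
  have i2 : IntervalIntegrable (fun u : ℝ => d2*u^2) MeasureTheory.volume (l-L) (r-L) :=
    (continuous_const.mul (continuous_pow 2)).intervalIntegrable _ _
  have i3 : IntervalIntegrable (fun u : ℝ => d3*u^3) MeasureTheory.volume (l-L) (r-L) :=
    (continuous_const.mul (continuous_pow 3)).intervalIntegrable _ _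
  rw [h1, intervalIntegral.integral_add ((i0.add i1).add i2) i3,
    intervalIntegral.integral_add (i0.add i1) i2, intervalIntegral.integral_add i0 i1,
    intervalIntegral.integral_const, intervalIntegral.integral_const_mul,
    intervalIntegral.integral_const_mul, intervalIntegral.integral_const_mul,
    integral_id, integral_pow, integral_pow]
  simp only [smul_eq_mul]
  push_cast
  ring

lemma poly_avg (d0 d1 d2 d3 L x₀ h : ℝ) (hh : h ≠ 0) :
    (13/12)*((1/h) * ∫ x in (x₀ - h/2)..(x₀ + h/2), (d0 + d1*(x-L) + d2*(x-L)^2 + d3*(x-L)^3))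
      - (1/24)*(((1/h) * ∫ x in (x₀ - h - h/2)..(x₀ - h + h/2),
            (d0 + d1*(x-L) + d2*(x-L)^2 + d3*(x-L)^3))
        + ((1/h) * ∫ x in (x₀ + h - h/2)..(x₀ + h + h/2),
            (d0 + d1*(x-L) + d2*(x-L)^2 + d3*(x-L)^3)))
    = d0 + d1*(x₀-L) + d2*(x₀-L)^2 + d3*(x₀-L)^3 := by
  rw [cubic_integral, cubic_integral, cubic_integral]
  field_simp
  ring

lemma itDW_eq {g : ℝ → ℝ} (hg : ContDiff ℝ 4 g) {s : Set ℝ} (hs : UniqueDiffOn ℝ s)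
    (n : ℕ) (hn : n ≤ 4) : ∀ x ∈ s, iteratedDerivWithin n g s x = iteratedDeriv n g x := by
  induction n with
  | zero => intro x hx; rw [iteratedDerivWithin_zero, iteratedDeriv_zero]
  | succ n IH =>
    intro x hx
    have IH' := IH (le_trans (Nat.le_succ n) hn)
    have hdiff : DifferentiableAt ℝ (iteratedDeriv n g) x := by
      have := hg.differentiable_iteratedDeriv n (by exact_mod_cast hn)
      exact this x
    rw [iteratedDerivWithin_succ,
      derivWithin_congr (fun y hy => IH' y hy) (IH' x hx),
      hdiff.derivWithin (hs x hx), iteratedDeriv_succ]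

lemma one_dim_est {g : ℝ → ℝ} (hg : ContDiff ℝ 4 g) {x₀ h M : ℝ} (hh : 0 < h)
    (hM : ∀ x ∈ Set.Icc (x₀ - 3*h/2) (x₀ + 3*h/2), |iteratedDeriv 4 g x| ≤ M) :
    |g x₀ - ((13/12)*((1/h) * ∫ x in (x₀ - h/2)..(x₀ + h/2), g x)
      - (1/24)*(((1/h) * ∫ x in (x₀ - h - h/2)..(x₀ - h + h/2), g x)
        + ((1/h) * ∫ x in (x₀ + h - h/2)..(x₀ + h + h/2), g x)))| ≤ 30 * M * h^4 := by
  have hM0 : 0 ≤ M := le_trans (abs_nonneg _) (hM x₀ ⟨by linarith, by linarith⟩)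
  obtain ⟨L, hLdef⟩ : ∃ y : ℝ, y = x₀ - 3*h/2 := ⟨_, rfl⟩
  obtain ⟨R, hRdef⟩ : ∃ y : ℝ, y = x₀ + 3*h/2 := ⟨_, rfl⟩
  have hLR : L < R := by rw [hLdef, hRdef]; linarith
  have husd : UniqueDiffOn ℝ (Set.Icc L R) := uniqueDiffOn_Icc hLR
  obtain ⟨d0, hd0⟩ : ∃ y : ℝ, y = iteratedDerivWithin 0 g (Set.Icc L R) L := ⟨_, rfl⟩
  obtain ⟨d1, hd1⟩ : ∃ y : ℝ, y = iteratedDerivWithin 1 g (Set.Icc L R) L := ⟨_, rfl⟩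
  obtain ⟨d2, hd2⟩ : ∃ y : ℝ, y = iteratedDerivWithin 2 g (Set.Icc L R) L := ⟨_, rfl⟩
  obtain ⟨d3, hd3⟩ : ∃ y : ℝ, y = iteratedDerivWithin 3 g (Set.Icc L R) L := ⟨_, rfl⟩
  obtain ⟨P, hPdef⟩ : ∃ P : ℝ → ℝ,
      P = fun x => d0 + d1*(x-L) + (d2/2)*(x-L)^2 + (d3/6)*(x-L)^3 := ⟨_, rfl⟩
  have hPc : Continuous P := by rw [hPdef]; fun_prop
  have htp : ∀ x : ℝ, taylorWithinEval g 3 (Set.Icc L R) L x = P x := by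
    intro x
    rw [taylor_within_apply, hPdef, hd0, hd1, hd2, hd3]
    simp only [Finset.sum_range_succ, Finset.sum_range_zero, smul_eq_mul, Nat.factorial]
    push_cast
    ring
  have htay : ∀ x ∈ Set.Icc L R, |g x - P x| ≤ 27/2 * (M * h^4) := by
    intro x hx
    have hb := taylor_mean_remainder_bound (n := 3) (C := M) hLR.le (hg.contDiffOn) hx ?_
    · rw [htp, Real.norm_eq_abs] at hb
      norm_num [Nat.factorial] at hb
      refine hb.trans ?_
      have h1 : 0 ≤ x - L := by have := hx.1; linarith
      have h2 : x - L ≤ 3*h := by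
        have := hx.2; rw [hRdef] at this; rw [hLdef]; linarith
      have h3 : (x - L)^4 ≤ (3*h)^4 := pow_le_pow_left₀ h1 h2 4
      nlinarith [mul_le_mul_of_nonneg_left h3 hM0]
    · intro y hy
      rw [Real.norm_eq_abs, itDW_eq hg husd 4 le_rfl y hy]
      rw [hLdef, hRdef] at hy
      exact hM y hy
  have key : ∀ l r : ℝ, L ≤ l → l ≤ r → r ≤ R →
      |(∫ x in l..r, g x) - ∫ x in l..r, P x| ≤ 27/2*(M*h^4) * (r - l) := by
    intro l r h1 h2 h3
    rw [← intervalIntegral.integral_sub (hg.continuous.intervalIntegrable _ _)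
      (hPc.intervalIntegrable _ _)]
    have hb := intervalIntegral.norm_integral_le_of_norm_le_const
      (C := 27/2*(M*h^4)) (f := fun x => g x - P x) (a := l) (b := r) ?_
    · rw [Real.norm_eq_abs, abs_of_nonneg (by linarith : (0:ℝ) ≤ r - l)] at hb
      exact hb
    · intro x hx
      rw [Set.uIoc_of_le h2] at hx
      exact htay x ⟨le_trans h1 hx.1.le, le_trans hx.2 h3⟩
  have e1 := key (x₀ - h/2) (x₀ + h/2) (by rw [hLdef]; linarith) (by linarith)
    (by rw [hRdef]; linarith)
  have e2 := key (x₀ - h - h/2) (x₀ - h + h/2) (by rw [hLdef]; linarith) (by linarith)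
    (by rw [hRdef]; linarith)
  have e3 := key (x₀ + h - h/2) (x₀ + h + h/2) (by rw [hLdef]; linarith) (by linarith)
    (by rw [hRdef]; linarith)
  rw [show (x₀ + h/2) - (x₀ - h/2) = h by ring] at e1
  rw [show (x₀ - h + h/2) - (x₀ - h - h/2) = h by ring] at e2
  rw [show (x₀ + h + h/2) - (x₀ + h - h/2) = h by ring] at e3
  have hPavg : (13/12)*((1/h) * ∫ x in (x₀ - h/2)..(x₀ + h/2), P x)
      - (1/24)*(((1/h) * ∫ x in (x₀ - h - h/2)..(x₀ - h + h/2), P x)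
        + ((1/h) * ∫ x in (x₀ + h - h/2)..(x₀ + h + h/2), P x)) = P x₀ := by
    rw [hPdef]
    exact poly_avg d0 d1 (d2/2) (d3/6) L x₀ h (ne_of_gt hh)
  set A1 := ∫ x in (x₀ - h/2)..(x₀ + h/2), g x
  set A2 := ∫ x in (x₀ - h - h/2)..(x₀ - h + h/2), g x
  set A3 := ∫ x in (x₀ + h - h/2)..(x₀ + h + h/2), g x
  set B1 := ∫ x in (x₀ - h/2)..(x₀ + h/2), P x
  set B2 := ∫ x in (x₀ - h - h/2)..(x₀ - h + h/2), P x
  set B3 := ∫ x in (x₀ + h - h/2)..(x₀ + h + h/2), P x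
  have hgoal_eq : g x₀ - ((13/12)*((1/h) * A1) - (1/24)*((1/h)*A2 + (1/h)*A3))
      = (g x₀ - P x₀) - ((13/12)*((1/h)*(A1-B1))
        - (1/24)*((1/h)*(A2-B2) + (1/h)*(A3-B3))) := by
    linear_combination -hPavg
  rw [hgoal_eq]
  have hii : ∀ A B : ℝ, |A - B| ≤ 27/2*(M*h^4) * h → |(1/h)*(A-B)| ≤ 27/2*(M*h^4) := by
    intro A B hAB
    rw [abs_mul, abs_of_pos (by positivity : (0:ℝ) < 1/h)]
    have := mul_le_mul_of_nonneg_left hAB (by positivity : (0:ℝ) ≤ 1/h)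
    calc (1/h) * |A - B| ≤ (1/h) * (27/2*(M*h^4) * h) := this
      _ = 27/2*(M*h^4) := by field_simp
  have t1 := hii A1 B1 e1
  have t2 := hii A2 B2 e2
  have t3 := hii A3 B3 e3
  have e0 := htay x₀ ⟨by rw [hLdef]; linarith, by rw [hRdef]; linarith⟩
  have b0 := abs_le.mp e0
  have b1 := abs_le.mp t1
  have b2 := abs_le.mp t2
  have b3 := abs_le.mp t3
  have hnn : 0 ≤ M * h^4 := by positivity
  refine abs_le.mpr ⟨?_, ?_⟩ <;>
    linarith [b0.1, b0.2, b1.1, b1.2, b2.1, b2.2, b3.1, b3.2]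

noncomputable def dty (φ : ℝ × ℝ → ℝ) : ℝ × ℝ → ℝ := fun p => fderiv ℝ φ p (0, 1)
noncomputable def dtx (φ : ℝ × ℝ → ℝ) : ℝ × ℝ → ℝ := fun p => fderiv ℝ φ p (1, 0)

lemma dd_contDiff {φ : ℝ × ℝ → ℝ} {v : ℝ × ℝ} {n : ℕ} (h : ContDiff ℝ ((n : ℕ) + 1) φ) :
    ContDiff ℝ n (fun p => fderiv ℝ φ p v) := by
  have h1 : ContDiff ℝ n (fderiv ℝ φ) := h.fderiv_right (by exact_mod_cast le_rfl)
  exact (ContinuousLinearMap.apply ℝ ℝ v).contDiff.comp h1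

lemma dty_contDiff {φ : ℝ × ℝ → ℝ} {n : ℕ} (h : ContDiff ℝ ((n : ℕ) + 1) φ) :
    ContDiff ℝ n (dty φ) := dd_contDiff h

lemma dtx_contDiff {φ : ℝ × ℝ → ℝ} {n : ℕ} (h : ContDiff ℝ ((n : ℕ) + 1) φ) :
    ContDiff ℝ n (dtx φ) := dd_contDiff h

lemma dty_hcs {φ : ℝ × ℝ → ℝ} (h : HasCompactSupport φ) : HasCompactSupport (dty φ) :=
  h.fderiv_apply ℝ (0, 1)

lemma dtx_hcs {φ : ℝ × ℝ → ℝ} (h : HasCompactSupport φ) : HasCompactSupport (dtx φ) :=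
  h.fderiv_apply ℝ (1, 0)

lemma deriv_slice_y {φ : ℝ × ℝ → ℝ} (hφ : Differentiable ℝ φ) (s t : ℝ) :
    deriv (fun t' => φ (s, t')) t = dty φ (s, t) := by
  have h1 : HasDerivAt (fun t' : ℝ => ((s, t') : ℝ × ℝ)) (((0 : ℝ), (1 : ℝ)) : ℝ × ℝ) t :=
    (hasDerivAt_const t s).prodMk (hasDerivAt_id t)
  exact ((hφ (s, t)).hasFDerivAt.comp_hasDerivAt t h1).deriv

lemma deriv_slice_x {φ : ℝ × ℝ → ℝ} (hφ : Differentiable ℝ φ) (s t : ℝ) :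
    deriv (fun s' => φ (s', t)) s = dtx φ (s, t) := by
  have h1 : HasDerivAt (fun s' : ℝ => ((s', t) : ℝ × ℝ)) (((1 : ℝ), (0 : ℝ)) : ℝ × ℝ) s :=
    (hasDerivAt_id s).prodMk (hasDerivAt_const s t)
  exact ((hφ (s, t)).hasFDerivAt.comp_hasDerivAt s h1).deriv

lemma slice4y {φ : ℝ × ℝ → ℝ} (hφ : ContDiff ℝ 4 φ) (s t : ℝ) :
    iteratedDeriv 4 (fun t' => φ (s, t')) t = dty (dty (dty (dty φ))) (s, t) := by
  have c3 : ContDiff ℝ 3 (dty φ) := dty_contDiff hφ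
  have c2 : ContDiff ℝ 2 (dty (dty φ)) := dty_contDiff c3
  have c1 : ContDiff ℝ 1 (dty (dty (dty φ))) := dty_contDiff c2
  have hd : ∀ ψ : ℝ × ℝ → ℝ, Differentiable ℝ ψ →
      deriv (fun t' => ψ (s, t')) = fun t' => dty ψ (s, t') :=
    fun ψ hψ => funext fun t' => deriv_slice_y hψ s t'
  rw [show (4 : ℕ) = 3 + 1 from rfl, iteratedDeriv_succ', hd φ (hφ.differentiable (by norm_num)),
    show (3 : ℕ) = 2 + 1 from rfl, iteratedDeriv_succ', hd _ (c3.differentiable (by norm_num)),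
    show (2 : ℕ) = 1 + 1 from rfl, iteratedDeriv_succ', hd _ (c2.differentiable (by norm_num)),
    show (1 : ℕ) = 0 + 1 from rfl, iteratedDeriv_succ', hd _ (c1.differentiable (by norm_num)),
    iteratedDeriv_zero]

lemma slice4x {φ : ℝ × ℝ → ℝ} (hφ : ContDiff ℝ 4 φ) (s t : ℝ) :
    iteratedDeriv 4 (fun s' => φ (s', t)) s = dtx (dtx (dtx (dtx φ))) (s, t) := by
  have c3 : ContDiff ℝ 3 (dtx φ) := dtx_contDiff hφ
  have c2 : ContDiff ℝ 2 (dtx (dtx φ)) := dtx_contDiff c3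
  have c1 : ContDiff ℝ 1 (dtx (dtx (dtx φ))) := dtx_contDiff c2
  have hd : ∀ ψ : ℝ × ℝ → ℝ, Differentiable ℝ ψ →
      deriv (fun s' => ψ (s', t)) = fun s' => dtx ψ (s', t) :=
    fun ψ hψ => funext fun s' => deriv_slice_x hψ s' t
  rw [show (4 : ℕ) = 3 + 1 from rfl, iteratedDeriv_succ', hd φ (hφ.differentiable (by norm_num)),
    show (3 : ℕ) = 2 + 1 from rfl, iteratedDeriv_succ', hd _ (c3.differentiable (by norm_num)),
    show (2 : ℕ) = 1 + 1 from rfl, iteratedDeriv_succ', hd _ (c2.differentiable (by norm_num)),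
    show (1 : ℕ) = 0 + 1 from rfl, iteratedDeriv_succ', hd _ (c1.differentiable (by norm_num)),
    iteratedDeriv_zero]

lemma bound_of_hcs {ψ : ℝ × ℝ → ℝ} (hc : Continuous ψ) (hs : HasCompactSupport ψ) :
    ∃ M : ℝ, 0 ≤ M ∧ ∀ p, |ψ p| ≤ M := by
  obtain ⟨p₀, hp₀⟩ := (hc.abs).exists_forall_ge_of_hasCompactSupport
    (hs.comp_left (g := fun x : ℝ => |x|) abs_zero)
  exact ⟨|ψ p₀|, abs_nonneg _, hp₀⟩

lemma clamp_est (c r ε x : ℝ) (hε : 0 ≤ ε) (hr : 0 ≤ r)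
    (hx : x ∈ Set.Icc (c - (r + ε)) (c + (r + ε))) :
    max (c - r) (min x (c + r)) ∈ Set.Icc (c - r) (c + r) ∧
      |x - max (c - r) (min x (c + r))| ≤ ε := by
  obtain ⟨h1, h2⟩ := hx
  rcases le_total x (c - r) with hc1 | hc1
  · have hmin : min x (c + r) = x := min_eq_left (by linarith)
    rw [hmin, max_eq_left hc1]
    refine ⟨⟨le_refl _, by linarith⟩, ?_⟩
    rw [abs_of_nonpos (by linarith)]; linarith
  · rcases le_total x (c + r) with hc2 | hc2
    · rw [min_eq_left hc2, max_eq_right hc1]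
      exact ⟨⟨hc1, hc2⟩, by simp [hε]⟩
    · rw [min_eq_right hc2, max_eq_right (by linarith)]
      refine ⟨⟨by linarith, le_refl _⟩, ?_⟩
      rw [abs_of_nonneg (by linarith)]; linarith

set_option maxHeartbeats 2000000 in
theorem stmt16 (f : ℝ × ℝ → ℝ) (a b H : ℝ) (hH : 0 < H)
    (U : Set (ℝ × ℝ)) (hU : IsOpen U)
    (hbox : Set.Icc (a - 3 * H / 2) (a + 3 * H / 2) ×ˢ
        Set.Icc (b - 3 * H / 2) (b + 3 * H / 2) ⊆ U)
    (hf : ContDiffOn ℝ 4 f U)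
    (F : ℝ → ℝ → ℝ → ℝ)
    (hF : ∀ h x y, F h x y = (1 / h ^ 2) *
        ∫ s in (x - h / 2)..(x + h / 2), ∫ t in (y - h / 2)..(y + h / 2), f (s, t)) :
    ∃ C : ℝ, ∀ h : ℝ, 0 < h → h ≤ H →
      |f (a, b) - (F h a b
          - (1 / 24) * ((F h (a - h) b - 2 * F h a b + F h (a + h) b)
              + (F h a (b - h) - 2 * F h a b + F h a (b + h)))
          + (1 / 576) * ((F h (a - h) (b - h) - 2 * F h (a - h) b + F h (a - h) (b + h))
              - 2 * (F h a (b - h) - 2 * F h a b + F h a (b + h))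
              + (F h (a + h) (b - h) - 2 * F h (a + h) b + F h (a + h) (b + h))))|
        ≤ C * h ^ 4 := by
  have hKc : IsCompact (Set.Icc (a - 3*H/2) (a + 3*H/2) ×ˢ Set.Icc (b - 3*H/2) (b + 3*H/2)) :=
    isCompact_Icc.prod isCompact_Icc
  obtain ⟨ε, hε0, hεsub⟩ := hKc.exists_cthickening_subset_open hU hbox
  set bx : ContDiffBump a := ⟨3*H/2, 3*H/2 + ε, by linarith, by linarith⟩ with hbxdef
  set byy : ContDiffBump b := ⟨3*H/2, 3*H/2 + ε, by linarith, by linarith⟩ with hbydef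
  have hbxr : bx.rOut = 3*H/2 + ε := rfl
  have hbyr : byy.rOut = 3*H/2 + ε := rfl
  obtain ⟨g, hgdef⟩ : ∃ g : ℝ × ℝ → ℝ, g = fun p => bx p.1 * byy p.2 * f p := ⟨_, rfl⟩
  have hBsub : (Set.Icc (a - (3*H/2 + ε)) (a + (3*H/2 + ε)) ×ˢ
      Set.Icc (b - (3*H/2 + ε)) (b + (3*H/2 + ε))) ⊆ U := by
    refine subset_trans ?_ hεsub
    rintro ⟨p1, p2⟩ ⟨hp1, hp2⟩
    obtain ⟨hq1m, hq1d⟩ := clamp_est a (3*H/2) ε p1 hε0.le (by linarith) hp1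
    obtain ⟨hq2m, hq2d⟩ := clamp_est b (3*H/2) ε p2 hε0.le (by linarith) hp2
    apply Metric.mem_cthickening_of_dist_le (p1, p2)
      (max (a - 3*H/2) (min p1 (a + 3*H/2)), max (b - 3*H/2) (min p2 (b + 3*H/2))) ε _ ?_ ?_
    · exact Set.mem_prod.mpr ⟨hq1m, hq2m⟩
    · rw [Prod.dist_eq]
      apply max_le <;> rw [Real.dist_eq] <;> assumption
  have hgf : ∀ p : ℝ × ℝ, p ∈ (Set.Icc (a - 3*H/2) (a + 3*H/2) ×ˢ
      Set.Icc (b - 3*H/2) (b + 3*H/2)) → g p = f p := by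
    intro p hp
    simp only [hgdef]
    have h1 : bx p.1 = 1 := bx.one_of_mem_closedBall (by
      rw [Real.closedBall_eq_Icc]; exact hp.1)
    have h2 : byy p.2 = 1 := byy.one_of_mem_closedBall (by
      rw [Real.closedBall_eq_Icc]; exact hp.2)
    rw [h1, h2]; ring
  have hsupp : ∀ p : ℝ × ℝ, p ∉ (Set.Icc (a - (3*H/2 + ε)) (a + (3*H/2 + ε)) ×ˢ
      Set.Icc (b - (3*H/2 + ε)) (b + (3*H/2 + ε))) → g p = 0 := by
    intro p hp
    rw [Set.mem_prod, not_and_or] at hp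
    simp only [hgdef]
    rcases hp with hp | hp
    · have hz : bx p.1 = 0 := bx.zero_of_le_dist (by
        rw [hbxr, Real.dist_eq]
        rw [Set.mem_Icc, not_and_or, not_le, not_le] at hp
        rcases hp with hcase | hcase
        · exact le_abs.mpr (Or.inr (by linarith))
        · exact le_abs.mpr (Or.inl (by linarith)))
      rw [hz]; ring
    · have hz : byy p.2 = 0 := byy.zero_of_le_dist (by
        rw [hbyr, Real.dist_eq]
        rw [Set.mem_Icc, not_and_or, not_le, not_le] at hp
        rcases hp with hcase | hcase
        · exact le_abs.mpr (Or.inr (by linarith))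
        · exact le_abs.mpr (Or.inl (by linarith)))
      rw [hz]; ring
  have hgc4 : ContDiff ℝ 4 g := by
    rw [contDiff_iff_contDiffAt]
    intro p
    by_cases hp : p ∈ U
    · have hχ : ContDiffOn ℝ 4 (fun q : ℝ × ℝ => bx q.1 * byy q.2) U :=
        ((bx.contDiff.comp contDiff_fst).mul (byy.contDiff.comp contDiff_snd)).contDiffOn
      have hgU : ContDiffOn ℝ 4 g U := by rw [hgdef]; exact hχ.mul hf
      exact (hgU p hp).contDiffAt (hU.mem_nhds hp)
    · have hpB : p ∉ (Set.Icc (a - (3*H/2 + ε)) (a + (3*H/2 + ε)) ×ˢ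
          Set.Icc (b - (3*H/2 + ε)) (b + (3*H/2 + ε))) := fun hB => hp (hBsub hB)
      have hev : ∀ᶠ q in nhds p, g q = 0 := by
        filter_upwards [((isClosed_Icc.prod isClosed_Icc).isOpen_compl).mem_nhds hpB] with q hq
        exact hsupp q hq
      exact (contDiffAt_const (c := (0:ℝ))).congr_of_eventuallyEq hev
  have hgcs : HasCompactSupport g :=
    HasCompactSupport.intro (isCompact_Icc.prod isCompact_Icc) hsupp
  have hgcont : Continuous g := hgc4.continuous
  obtain ⟨My, hMy0, hMy⟩ := bound_of_hcs
    ((dty_contDiff (n := 0) (dty_contDiff (n := 1) (dty_contDiff (n := 2)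
      (dty_contDiff (n := 3) hgc4)))).continuous)
    (dty_hcs (dty_hcs (dty_hcs (dty_hcs hgcs))))
  obtain ⟨Mx, hMx0, hMx⟩ := bound_of_hcs
    ((dtx_contDiff (n := 0) (dtx_contDiff (n := 1) (dtx_contDiff (n := 2)
      (dtx_contDiff (n := 3) hgc4)))).continuous)
    (dtx_hcs (dtx_hcs (dtx_hcs (dtx_hcs hgcs))))
  refine ⟨30 * Mx + 35 * My, ?_⟩
  intro h hh hhH
  have hne : h ≠ 0 := ne_of_gt hh
  have hFg : ∀ x y : ℝ, x ∈ Set.Icc (a - h) (a + h) → y ∈ Set.Icc (b - h) (b + h) →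
      F h x y = (1 / h ^ 2) *
        ∫ s in (x - h / 2)..(x + h / 2), ∫ t in (y - h / 2)..(y + h / 2), g (s, t) := by
    intro x y hx hy
    rw [hF]
    congr 1
    apply intervalIntegral.integral_congr
    intro s hs
    rw [Set.uIcc_of_le (by linarith : x - h/2 ≤ x + h/2)] at hs
    apply intervalIntegral.integral_congr
    intro t ht
    rw [Set.uIcc_of_le (by linarith : y - h/2 ≤ y + h/2)] at ht
    refine (hgf (s, t) ⟨⟨?_, ?_⟩, ⟨?_, ?_⟩⟩).symm
    · have := hx.1; have := hs.1; simp only []; linarith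
    · have := hx.2; have := hs.2; simp only []; linarith
    · have := hy.1; have := ht.1; simp only []; linarith
    · have := hy.2; have := ht.2; simp only []; linarith
  have hu : ∀ c d : ℝ, Continuous (fun s => ∫ t in c..d, g (s, t)) := by
    intro c d
    exact intervalIntegral.continuous_parametric_intervalIntegral_of_continuous'
      (f := fun s t => g (s, t)) (μ := MeasureTheory.volume)
      (by exact hgcont.comp (continuous_fst.prodMk continuous_snd)) c d
  have hy_err : ∀ s : ℝ,
      |g (s, b) - ((13/12)*((1/h) * ∫ t in (b - h/2)..(b + h/2), g (s, t))
        - (1/24)*(((1/h) * ∫ t in (b - h - h/2)..(b - h + h/2), g (s, t))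
          + ((1/h) * ∫ t in (b + h - h/2)..(b + h + h/2), g (s, t))))| ≤ 30 * My * h^4 := by
    intro s
    have hsc : ContDiff ℝ 4 (fun t => g (s, t)) := hgc4.comp (contDiff_const.prodMk contDiff_id)
    exact one_dim_est hsc hh (fun t' _ => by
      rw [slice4y hgc4 s t']; exact hMy (s, t'))
  have hx_err : |g (a, b) - ((13/12)*((1/h) * ∫ s in (a - h/2)..(a + h/2), g (s, b))
      - (1/24)*(((1/h) * ∫ s in (a - h - h/2)..(a - h + h/2), g (s, b))
        + ((1/h) * ∫ s in (a + h - h/2)..(a + h + h/2), g (s, b))))| ≤ 30 * Mx * h^4 := by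
    have hsc : ContDiff ℝ 4 (fun s => g (s, b)) := hgc4.comp (contDiff_id.prodMk contDiff_const)
    exact one_dim_est hsc hh (fun s' _ => by rw [slice4x hgc4 s' b]; exact hMx (s', b))
  obtain ⟨Q, hQdef⟩ : ∃ Q : ℝ → ℝ, Q = fun s =>
      (13/12)*((1/h) * ∫ t in (b - h/2)..(b + h/2), g (s, t))
      - (1/24)*(((1/h) * ∫ t in (b - h - h/2)..(b - h + h/2), g (s, t))
        + ((1/h) * ∫ t in (b + h - h/2)..(b + h + h/2), g (s, t))) := ⟨_, rfl⟩
  have hQc : Continuous Q := by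
    rw [hQdef]
    exact (continuous_const.mul (continuous_const.mul (hu _ _))).sub
      (continuous_const.mul ((continuous_const.mul (hu _ _)).add
        (continuous_const.mul (hu _ _))))
  have hsplit : ∀ l r : ℝ, (∫ s in l..r, Q s) =
      (13/12)*((1/h) * ∫ s in l..r, ∫ t in (b - h/2)..(b + h/2), g (s, t))
      - (1/24)*(((1/h) * ∫ s in l..r, ∫ t in (b - h - h/2)..(b - h + h/2), g (s, t))
        + ((1/h) * ∫ s in l..r, ∫ t in (b + h - h/2)..(b + h + h/2), g (s, t))) := by
    intro l r
    have i1 := (hu (b - h/2) (b + h/2)).intervalIntegrable (μ := MeasureTheory.volume) l r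
    have i2 := (hu (b - h - h/2) (b - h + h/2)).intervalIntegrable (μ := MeasureTheory.volume) l r
    have i3 := (hu (b + h - h/2) (b + h + h/2)).intervalIntegrable (μ := MeasureTheory.volume) l r
    have he : ∀ s : ℝ, Q s = (13/(12*h)) * (∫ t in (b - h/2)..(b + h/2), g (s, t))
        - ((1/(24*h)) * (∫ t in (b - h - h/2)..(b - h + h/2), g (s, t))
          + (1/(24*h)) * (∫ t in (b + h - h/2)..(b + h + h/2), g (s, t))) := by
      intro s; rw [hQdef]; ring
    have hcg : (∫ s in l..r, Q s) = ∫ s in l..r,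
        ((13/(12*h)) * (∫ t in (b - h/2)..(b + h/2), g (s, t))
        - ((1/(24*h)) * (∫ t in (b - h - h/2)..(b - h + h/2), g (s, t))
          + (1/(24*h)) * (∫ t in (b + h - h/2)..(b + h + h/2), g (s, t)))) :=
      intervalIntegral.integral_congr (fun s _ => he s)
    rw [hcg, intervalIntegral.integral_sub (i1.const_mul _) ((i2.const_mul _).add
        (i3.const_mul _)),
      intervalIntegral.integral_add (i2.const_mul _) (i3.const_mul _),
      intervalIntegral.integral_const_mul, intervalIntegral.integral_const_mul,
      intervalIntegral.integral_const_mul]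
    ring
  have hma : a ∈ Set.Icc (a - h) (a + h) := ⟨by linarith, by linarith⟩
  have hmam : a - h ∈ Set.Icc (a - h) (a + h) := ⟨le_refl _, by linarith⟩
  have hmap : a + h ∈ Set.Icc (a - h) (a + h) := ⟨by linarith, le_refl _⟩
  have hmb : b ∈ Set.Icc (b - h) (b + h) := ⟨by linarith, by linarith⟩
  have hmbm : b - h ∈ Set.Icc (b - h) (b + h) := ⟨le_refl _, by linarith⟩
  have hmbp : b + h ∈ Set.Icc (b - h) (b + h) := ⟨by linarith, le_refl _⟩
  have hExpr : (F h a b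
          - (1 / 24) * ((F h (a - h) b - 2 * F h a b + F h (a + h) b)
              + (F h a (b - h) - 2 * F h a b + F h a (b + h)))
          + (1 / 576) * ((F h (a - h) (b - h) - 2 * F h (a - h) b + F h (a - h) (b + h))
              - 2 * (F h a (b - h) - 2 * F h a b + F h a (b + h))
              + (F h (a + h) (b - h) - 2 * F h (a + h) b + F h (a + h) (b + h))))
      = (13/12)*((1/h) * ∫ s in (a - h/2)..(a + h/2), Q s)
        - (1/24)*(((1/h) * ∫ s in (a - h - h/2)..(a - h + h/2), Q s)
          + ((1/h) * ∫ s in (a + h - h/2)..(a + h + h/2), Q s)) := by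
    rw [hsplit, hsplit, hsplit,
      hFg a b hma hmb, hFg (a - h) b hmam hmb, hFg (a + h) b hmap hmb,
      hFg a (b - h) hma hmbm, hFg a (b + h) hma hmbp,
      hFg (a - h) (b - h) hmam hmbm, hFg (a - h) (b + h) hmam hmbp,
      hFg (a + h) (b - h) hmap hmbm, hFg (a + h) (b + h) hmap hmbp]
    field_simp
    ring
  have hfg_ab : f (a, b) = g (a, b) :=
    (hgf (a, b) ⟨⟨by simp only []; linarith, by simp only []; linarith⟩,
      ⟨by simp only []; linarith, by simp only []; linarith⟩⟩).symm
  rw [hfg_ab, hExpr]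
  have hgbc : Continuous (fun s => g (s, b)) :=
    hgcont.comp (continuous_id.prodMk continuous_const)
  have hkey : ∀ l r : ℝ, l ≤ r →
      |(∫ s in l..r, Q s) - ∫ s in l..r, g (s, b)| ≤ 30*My*h^4 * (r - l) := by
    intro l r hlr
    rw [← intervalIntegral.integral_sub (hQc.intervalIntegrable _ _)
      (hgbc.intervalIntegrable _ _)]
    have hb := intervalIntegral.norm_integral_le_of_norm_le_const (C := 30*My*h^4)
      (f := fun s => Q s - g (s, b)) (a := l) (b := r) ?_
    · rw [Real.norm_eq_abs, abs_of_nonneg (by linarith : (0:ℝ) ≤ r - l)] at hb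
      exact hb
    · intro s _
      rw [Real.norm_eq_abs, abs_sub_comm]
      have hys := hy_err s
      rw [hQdef]
      exact hys
  have e1 := hkey (a - h/2) (a + h/2) (by linarith)
  have e2 := hkey (a - h - h/2) (a - h + h/2) (by linarith)
  have e3 := hkey (a + h - h/2) (a + h + h/2) (by linarith)
  rw [show (a + h/2) - (a - h/2) = h by ring] at e1
  rw [show (a - h + h/2) - (a - h - h/2) = h by ring] at e2
  rw [show (a + h + h/2) - (a + h - h/2) = h by ring] at e3
  have hii : ∀ A B : ℝ, |A - B| ≤ 30*My*h^4 * h → |(1/h)*(A - B)| ≤ 30*My*h^4 := by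
    intro A B hAB
    rw [abs_mul, abs_of_pos (by positivity : (0:ℝ) < 1/h)]
    calc (1/h) * |A - B| ≤ (1/h) * (30*My*h^4 * h) :=
          mul_le_mul_of_nonneg_left hAB (by positivity)
      _ = 30*My*h^4 := by field_simp
  have t1 := hii _ _ e1
  have t2 := hii _ _ e2
  have t3 := hii _ _ e3
  have hgoal_eq : g (a, b) - ((13/12)*((1/h) * ∫ s in (a - h/2)..(a + h/2), Q s)
        - (1/24)*(((1/h) * ∫ s in (a - h - h/2)..(a - h + h/2), Q s)
          + ((1/h) * ∫ s in (a + h - h/2)..(a + h + h/2), Q s)))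
      = (g (a, b) - ((13/12)*((1/h) * ∫ s in (a - h/2)..(a + h/2), g (s, b))
          - (1/24)*(((1/h) * ∫ s in (a - h - h/2)..(a - h + h/2), g (s, b))
            + ((1/h) * ∫ s in (a + h - h/2)..(a + h + h/2), g (s, b)))))
        - ((13/12)*((1/h)*((∫ s in (a - h/2)..(a + h/2), Q s)
            - ∫ s in (a - h/2)..(a + h/2), g (s, b)))
          - (1/24)*((1/h)*((∫ s in (a - h - h/2)..(a - h + h/2), Q s)
              - ∫ s in (a - h - h/2)..(a - h + h/2), g (s, b))
            + (1/h)*((∫ s in (a + h - h/2)..(a + h + h/2), Q s)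
              - ∫ s in (a + h - h/2)..(a + h + h/2), g (s, b)))) := by
    ring
  rw [hgoal_eq]
  have b0 := abs_le.mp hx_err
  have b1 := abs_le.mp t1
  have b2 := abs_le.mp t2
  have b3 := abs_le.mp t3
  have hnn : 0 ≤ My * h^4 := by positivity
  have hnn2 : 0 ≤ Mx * h^4 := by positivity
  refine abs_le.mpr ⟨?_, ?_⟩ <;>
    linarith [b0.1, b0.2, b1.1, b1.2, b2.1, b2.2, b3.1, b3.2]
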